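/- Let C be a triangulated category endowed with a weight structure w and an adjacent t-structure t, and m ≤ n. Then a morphism g of C kills weights m,...,n if and only if g factors through an object of C_{w∉[m,n]} (an object without weights m,...,n). -/

import Mathlib

open CategoryTheory CategoryTheory.Limits CategoryTheory.Pretriangulated Opposite

universe v u

variable (C : Type u) [Category.{v} C] [Preadditive C] [HasZeroObject C]
  [HasShift C ℤ] [∀ n : ℤ, (shiftFunctor C n).Additive] [Pretriangulated C]

/-- A weight structure on the triangulated category `C`. -/
structure WeightStructure where
  /-- the class `C_{w ≤ n}` -/
  le : ℤ → Set C
  /-- the class `C_{w ≥ n}` -/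
  ge : ℤ → Set C
  le_iso_closed : ∀ (n : ℤ) (X Y : C), (X ≅ Y) → X ∈ le n → Y ∈ le n
  ge_iso_closed : ∀ (n : ℤ) (X Y : C), (X ≅ Y) → X ∈ ge n → Y ∈ ge n
  le_retract : ∀ (n : ℤ) (X Y : C) (a : X ⟶ Y) (b : Y ⟶ X),
    a ≫ b = 𝟙 X → Y ∈ le n → X ∈ le n
  ge_retract : ∀ (n : ℤ) (X Y : C) (a : X ⟶ Y) (b : Y ⟶ X),
    a ≫ b = 𝟙 X → Y ∈ ge n → X ∈ ge n
  le_shift : ∀ (n k : ℤ) (X : C), X ∈ le n → X⟦k⟧ ∈ le (n + k)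
  ge_shift : ∀ (n k : ℤ) (X : C), X ∈ ge n → X⟦k⟧ ∈ ge (n + k)
  le_mono : ∀ n : ℤ, le n ⊆ le (n + 1)
  ge_anti : ∀ n : ℤ, ge (n + 1) ⊆ ge n
  orth : ∀ (n : ℤ) (X Y : C), X ∈ le n → Y ∈ ge (n + 1) → ∀ f : X ⟶ Y, f = 0
  decomp : ∀ (X : C) (k : ℤ), ∃ (A B : C) (x : A ⟶ X) (y : X ⟶ B) (δ : B ⟶ A⟦(1 : ℤ)⟧),
    (Triangle.mk x y δ ∈ distTriang C) ∧ A ∈ le k ∧ B ∈ ge (k + 1)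

variable {C}

/-- `(A, B, x, y)` is a `k`-weight decomposition of `X`. -/
def WeightStructure.IsWeightDecomp (w : WeightStructure C) (k : ℤ) {X : C} (A B : C)
    (x : A ⟶ X) (y : X ⟶ B) : Prop :=
  (∃ δ : B ⟶ A⟦(1 : ℤ)⟧, Triangle.mk x y δ ∈ distTriang C) ∧ A ∈ w.le k ∧ B ∈ w.ge (k + 1)

/-- `g : M ⟶ N` kills weights `m, …, n`. -/
def WeightStructure.KillsWeights (w : WeightStructure C) (m n : ℤ) {M N : C}
    (g : M ⟶ N) : Prop :=
  ∃ (A A' B B' : C) (x : A ⟶ M) (x' : M ⟶ A') (y' : B ⟶ N) (y : N ⟶ B'),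
    w.IsWeightDecomp n A A' x x' ∧ w.IsWeightDecomp (m - 1) B B' y' y ∧
      x ≫ g ≫ y = 0

/-- The class of objects of `C` without weights `m, …, n`. -/
def WeightStructure.without (w : WeightStructure C) (m n : ℤ) : Set C :=
  {M : C | w.KillsWeights m n (𝟙 M)}


/-- A `t`-structure on the triangulated category `C` (cohomological conventions,
with `le n = C_{t ≤ n}` and `ge n = C_{t ≥ n}`). -/
structure TStructure (C : Type u) [Category.{v} C] [Preadditive C] [HasZeroObject C]
    [HasShift C ℤ] [∀ n : ℤ, (shiftFunctor C n).Additive] [Pretriangulated C] where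
  le : ℤ → Set C
  ge : ℤ → Set C
  le_iso_closed : ∀ (n : ℤ) (X Y : C), (X ≅ Y) → X ∈ le n → Y ∈ le n
  ge_iso_closed : ∀ (n : ℤ) (X Y : C), (X ≅ Y) → X ∈ ge n → Y ∈ ge n
  le_shift : ∀ (n k : ℤ) (X : C), X ∈ le n → X⟦k⟧ ∈ le (n + k)
  ge_shift : ∀ (n k : ℤ) (X : C), X ∈ ge n → X⟦k⟧ ∈ ge (n + k)
  le_mono : ∀ n : ℤ, le n ⊆ le (n + 1)
  ge_anti : ∀ n : ℤ, ge (n + 1) ⊆ ge n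
  orth : ∀ (n : ℤ) (X Y : C), X ∈ ge (n + 1) → Y ∈ le n → ∀ f : X ⟶ Y, f = 0
  decomp : ∀ (X : C) (n : ℤ), ∃ (A B : C) (x : A ⟶ X) (y : X ⟶ B) (δ : B ⟶ A⟦(1 : ℤ)⟧),
    (Triangle.mk x y δ ∈ distTriang C) ∧ A ∈ ge (n + 1) ∧ B ∈ le n


section Aux

/-- Adjacency at level 0 propagates to all levels. -/
lemma adj_ge (w : WeightStructure C) (t : TStructure C)
    (adj : w.ge 0 = t.ge 0) (k : ℤ) {X : C} (hX : X ∈ w.ge k) : X ∈ t.ge k := by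
  have h1 : X⟦-k⟧ ∈ w.ge (k + -k) := w.ge_shift k (-k) X hX
  rw [add_neg_cancel, adj] at h1
  have h2 : (X⟦-k⟧)⟦k⟧ ∈ t.ge (0 + k) := t.ge_shift 0 k _ h1
  rw [zero_add] at h2
  exact t.ge_iso_closed k _ _ (shiftNegShift X k) h2

lemma adj_ge' (w : WeightStructure C) (t : TStructure C)
    (adj : w.ge 0 = t.ge 0) (k : ℤ) {X : C} (hX : X ∈ t.ge k) : X ∈ w.ge k := by
  have h1 : X⟦-k⟧ ∈ t.ge (k + -k) := t.ge_shift k (-k) X hX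
  rw [add_neg_cancel, ← adj] at h1
  have h2 : (X⟦-k⟧)⟦k⟧ ∈ w.ge (0 + k) := w.ge_shift 0 k _ h1
  rw [zero_add] at h2
  exact w.ge_iso_closed k _ _ (shiftNegShift X k) h2

lemma ge_mono_of_le (w : WeightStructure C) {a b : ℤ} (h : a ≤ b) :
    w.ge b ⊆ w.ge a := by
  have key : ∀ (k : ℕ) (a : ℤ), w.ge (a + k) ⊆ w.ge a := by
    intro k
    induction k with
    | zero => intro a X hX; simpa using hX
    | succ k ih =>
        intro a X hX
        refine ih a (w.ge_anti (a + k) ?_)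
        have : (a : ℤ) + (k + 1 : ℕ) = (a + k) + 1 := by push_cast; ring
        rwa [this] at hX
  obtain ⟨k, hk⟩ := Int.le.dest h
  intro X hX
  exact key k a (by rwa [hk])

/-- An object sitting in a triangle with low-weight fiber and high-weight cofiber
is without weights `m, …, n`. -/
lemma without_of_triangle (w : WeightStructure C) (m n : ℤ) (hmn : m ≤ n)
    {B Z D : C} (i : B ⟶ Z) (p : Z ⟶ D) (φ : D ⟶ B⟦(1 : ℤ)⟧)
    (hT : Triangle.mk i p φ ∈ distTriang C)
    (hB : B ∈ w.le (m - 1)) (hD : D ∈ w.ge (n + 1)) : Z ∈ w.without m n := by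
  obtain ⟨A, A', x, x', δ, hT', hA, hA'⟩ := w.decomp Z n
  refine ⟨A, A', B, D, x, x', i, p, ⟨⟨δ, hT'⟩, hA, hA'⟩,
    ⟨⟨φ, hT⟩, hB, ge_mono_of_le w (by omega) hD⟩, ?_⟩
  rw [Category.id_comp]
  exact w.orth n A D hA hD (x ≫ p)

end Aux

/-- If `t` is adjacent to `w`, a morphism kills weights `m, …, n` iff it factors
through an object without these weights. -/
theorem stmt11 (w : WeightStructure C) (t : TStructure C)
    (adj : w.ge 0 = t.ge 0) (m n : ℤ) (hmn : m ≤ n) {M N : C} (g : M ⟶ N) :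
    w.KillsWeights m n g ↔
      ∃ (Z : C) (a : M ⟶ Z) (b : Z ⟶ N), Z ∈ w.without m n ∧ a ≫ b = g := by
  constructor
  · rintro ⟨A, A', B, B', x, x', y', y, ⟨⟨δ, hTM⟩, hA, hA'⟩, ⟨⟨ε, hTN⟩, hB, hB'⟩, hzero⟩
    -- factor `g ≫ y` through `x'`
    obtain ⟨s, hs⟩ : ∃ s : A' ⟶ B', g ≫ y = x' ≫ s := Triangle.yoneda_exact₂ _ hTM (g ≫ y) hzero
    -- t-decomposition of `B'` at level `n`
    obtain ⟨D, E, d, e, η, hTD, hD, hE⟩ := t.decomp B' n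
    have hA't : A' ∈ t.ge (n + 1) := adj_ge w t adj (n + 1) hA'
    have hse : s ≫ e = 0 := t.orth n A' E hA't hE (s ≫ e)
    obtain ⟨s', hs'⟩ : ∃ s' : A' ⟶ D, s = s' ≫ d := Triangle.coyoneda_exact₂ _ hTD s hse
    -- build `Z`
    obtain ⟨Z, i, p, hTZ⟩ := distinguished_cocone_triangle₂ (d ≫ ε)
    have hZ : Z ∈ w.without m n :=
      without_of_triangle w m n hmn i p (d ≫ ε) hTZ hB (adj_ge' w t adj (n + 1) hD)
    -- build `b : Z ⟶ N`
    obtain ⟨b, hb1, hb2⟩ : ∃ b : Z ⟶ N, i ≫ b = 𝟙 B ≫ y' ∧ p ≫ d = b ≫ y :=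
      complete_distinguished_triangle_morphism₂ _ _ hTZ hTN
      (𝟙 B) d (by show (d ≫ ε) ≫ (shiftFunctor C 1).map (𝟙 B) = d ≫ ε; simp)
    -- lift `x' ≫ s'` through `p`
    have hφ : (x' ≫ s') ≫ (d ≫ ε) = 0 := by
      have hyε : y ≫ ε = 0 := comp_distTriang_mor_zero₂₃ _ hTN
      calc (x' ≫ s') ≫ (d ≫ ε) = (x' ≫ (s' ≫ d)) ≫ ε := by simp
      _ = (x' ≫ s) ≫ ε := by rw [← hs']
      _ = (g ≫ y) ≫ ε := by rw [← hs]
      _ = g ≫ (y ≫ ε) := by simp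
      _ = 0 := by rw [hyε, Limits.comp_zero]
    obtain ⟨a₀, ha₀⟩ : ∃ a₀ : M ⟶ Z, x' ≫ s' = a₀ ≫ p := Triangle.coyoneda_exact₃ _ hTZ (x' ≫ s') hφ
    -- the defect of `g - a₀ ≫ b` dies on `y`
    have hdef : (g - a₀ ≫ b) ≫ y = 0 := by
      have : a₀ ≫ b ≫ y = g ≫ y := by
        calc a₀ ≫ b ≫ y = a₀ ≫ p ≫ d := by rw [← hb2]
        _ = (x' ≫ s') ≫ d := by rw [ha₀]; simp
        _ = x' ≫ s := by rw [Category.assoc, ← hs']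
        _ = g ≫ y := hs.symm
      simp only [Preadditive.sub_comp, Category.assoc, this, sub_self]
    obtain ⟨u, hu⟩ : ∃ u : M ⟶ B, g - a₀ ≫ b = u ≫ y' := Triangle.coyoneda_exact₂ _ hTN (g - a₀ ≫ b) hdef
    refine ⟨Z, a₀ + u ≫ i, b, hZ, ?_⟩
    have hi : i ≫ b = y' := by simpa using hb1
    calc (a₀ + u ≫ i) ≫ b = a₀ ≫ b + u ≫ (i ≫ b) := by
          simp [Preadditive.add_comp]
    _ = a₀ ≫ b + u ≫ y' := by rw [hi]
    _ = a₀ ≫ b + (g - a₀ ≫ b) := by rw [← hu]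
    _ = g := by abel
  · rintro ⟨Z, a, b, ⟨AZ, AZ', BZ, BZ', xZ, xZ', yZ', yZ, ⟨⟨δZ, hT1⟩, hAZ, hAZ'⟩,
      ⟨⟨εZ, hT2⟩, hBZ, hBZ'⟩, hz⟩, hab⟩
    have hz' : xZ ≫ yZ = 0 := by simpa using hz
    obtain ⟨A, A', x, x', δ, hTM, hA, hA'⟩ := w.decomp M n
    obtain ⟨B, B', y', y, ε, hTN, hB, hB'⟩ := w.decomp N (m - 1)
    obtain ⟨u, hu⟩ : ∃ u : A ⟶ AZ, x ≫ a = u ≫ xZ := Triangle.coyoneda_exact₂ _ hT1 (x ≫ a)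
      (w.orth n A AZ' hA hAZ' ((x ≫ a) ≫ xZ'))
    obtain ⟨v, hv⟩ : ∃ v : BZ' ⟶ B', b ≫ y = yZ ≫ v := Triangle.yoneda_exact₂ _ hT2 (b ≫ y)
      (w.orth (m - 1) BZ B' hBZ hB' (yZ' ≫ b ≫ y))
    refine ⟨A, A', B, B', x, x', y', y, ⟨⟨δ, hTM⟩, hA, hA'⟩, ⟨⟨ε, hTN⟩, hB, hB'⟩, ?_⟩
    calc x ≫ g ≫ y = (x ≫ a) ≫ (b ≫ y) := by rw [← hab]; simp
    _ = (u ≫ xZ) ≫ (yZ ≫ v) := by rw [← hu, ← hv]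
    _ = u ≫ (xZ ≫ yZ) ≫ v := by simp
    _ = 0 := by rw [hz']; simp
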